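/- If v₀, v₁ satisfy the full steady-state mean BVP of the insect-respiration model (the ODE system together with all four boundary conditions v₀(0) = 0, v₁(0) = 0, v₁'(L) = 0, v₀(L) = c·α/(α+β)), then for every x ∈ [0, L] one has v₀(x) + v₁(x) = m·x, where m = ρ·c/(ρ·L + (1−ρ)·tanh(γL)/γ). In particular the steady-state mean oxygen flux to the tissue at x = 0, namely D·(v₀'(0) + v₁'(0)), equals D·m. -/

import Mathlib

/-- For the full steady-state mean BVP of the insect-respiration model,
`v₀ + v₁ = m·x` on `[0, L]` and the mean oxygen flux at `x = 0` equals `D·m`. -/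
theorem insect_mean_sum_value_and_flux
    (L D α β c ρ γ m : ℝ) (hL : 0 < L) (hD : 0 < D) (hα : 0 < α) (hβ : 0 < β) (hc : 0 < c)
    (hρ : ρ = α / (α + β)) (hγ : γ = Real.sqrt ((α + β) / D))
    (hm : m = ρ * c / (ρ * L + (1 - ρ) * Real.tanh (γ * L) / γ))
    (v₀ v₁ : ℝ → ℝ) (a b : ℝ) (ha : a < 0) (hb : L < b)
    (hreg0 : ContDiffOn ℝ 2 v₀ (Set.Ioo a b))
    (hreg1 : ContDiffOn ℝ 2 v₁ (Set.Ioo a b))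
    (hode0 : ∀ x ∈ Set.Icc (0:ℝ) L, D * deriv (deriv v₀) x = β * v₀ x - α * v₁ x)
    (hode1 : ∀ x ∈ Set.Icc (0:ℝ) L, D * deriv (deriv v₁) x = α * v₁ x - β * v₀ x)
    (hbc0 : v₀ 0 = 0) (hbc1 : v₁ 0 = 0)
    (hbc2 : deriv v₁ L = 0) (hbc3 : v₀ L = c * α / (α + β)) :
    (∀ x ∈ Set.Icc (0:ℝ) L, v₀ x + v₁ x = m * x) ∧
    D * (deriv v₀ 0 + deriv v₁ 0) = D * m := by
  have hsub : Set.Icc (0:ℝ) L ⊆ Set.Ioo a b := fun x hx =>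
    ⟨lt_of_lt_of_le ha hx.1, lt_of_le_of_lt hx.2 hb⟩
  have hopen : IsOpen (Set.Ioo a b) := isOpen_Ioo
  have d0 : DifferentiableOn ℝ v₀ (Set.Ioo a b) := hreg0.differentiableOn two_ne_zero
  have d1 : DifferentiableOn ℝ v₁ (Set.Ioo a b) := hreg1.differentiableOn two_ne_zero
  have d0' : DifferentiableOn ℝ (deriv v₀) (Set.Ioo a b) :=
    (hreg0.deriv_of_isOpen (m := 1) hopen (by norm_num)).differentiableOn one_ne_zero
  have d1' : DifferentiableOn ℝ (deriv v₁) (Set.Ioo a b) :=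
    (hreg1.deriv_of_isOpen (m := 1) hopen (by norm_num)).differentiableOn one_ne_zero
  have mem : ∀ x ∈ Set.Icc (0:ℝ) L, Set.Ioo a b ∈ nhds x := fun x hx =>
    hopen.mem_nhds (hsub hx)
  have hda0 : ∀ x ∈ Set.Icc (0:ℝ) L, HasDerivAt v₀ (deriv v₀ x) x := fun x hx =>
    (d0.differentiableAt (mem x hx)).hasDerivAt
  have hda1 : ∀ x ∈ Set.Icc (0:ℝ) L, HasDerivAt v₁ (deriv v₁ x) x := fun x hx =>
    (d1.differentiableAt (mem x hx)).hasDerivAt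
  have hda0' : ∀ x ∈ Set.Icc (0:ℝ) L, HasDerivAt (deriv v₀) (deriv (deriv v₀) x) x := fun x hx =>
    (d0'.differentiableAt (mem x hx)).hasDerivAt
  have hda1' : ∀ x ∈ Set.Icc (0:ℝ) L, HasDerivAt (deriv v₁) (deriv (deriv v₁) x) x := fun x hx =>
    (d1'.differentiableAt (mem x hx)).hasDerivAt
  set k := deriv v₀ 0 + deriv v₁ 0 with hk_def
  -- φ = deriv v₀ + deriv v₁ has zero derivative on [0,L]
  have hφ : ∀ x ∈ Set.Icc (0:ℝ) L, HasDerivAt (fun y => deriv v₀ y + deriv v₁ y) 0 x := by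
    intro x hx
    have H := (hda0' x hx).add (hda1' x hx)
    have e0 := hode0 x hx
    have e1 := hode1 x hx
    have hz : deriv (deriv v₀) x + deriv (deriv v₁) x = 0 := by
      have hDz : D * (deriv (deriv v₀) x + deriv (deriv v₁) x) = 0 := by
        linear_combination e0 + e1
      exact (mul_eq_zero.mp hDz).resolve_left hD.ne'
    rwa [hz] at H
  have hcontφ : ContinuousOn (fun y => deriv v₀ y + deriv v₁ y) (Set.Icc (0:ℝ) L) :=
    ((d0'.continuousOn.add d1'.continuousOn).mono hsub)
  have hφconst : ∀ x ∈ Set.Icc (0:ℝ) L, deriv v₀ x + deriv v₁ x = k := by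
    intro x hx
    have := constant_of_has_deriv_right_zero hcontφ
      (fun y hy => (hφ y (Set.Ico_subset_Icc_self hy)).hasDerivWithinAt) x hx
    simpa [hk_def] using this
  -- s = v₀ + v₁ equals k x on [0,L]
  have hsum : ∀ x ∈ Set.Icc (0:ℝ) L, v₀ x + v₁ x = k * x := by
    have hcontg : ContinuousOn (fun y => v₀ y + v₁ y - k * y) (Set.Icc (0:ℝ) L) := by
      apply ContinuousOn.sub
      · exact (d0.continuousOn.add d1.continuousOn).mono hsub
      · exact (continuous_const.mul continuous_id).continuousOn
    have hg : ∀ y ∈ Set.Ico (0:ℝ) L,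
        HasDerivWithinAt (fun y => v₀ y + v₁ y - k * y) 0 (Set.Ici y) y := by
      intro y hy
      have hy' := Set.Ico_subset_Icc_self hy
      have H := ((hda0 y hy').add (hda1 y hy')).sub ((hasDerivAt_id y).const_mul k)
      have hz : deriv v₀ y + deriv v₁ y - k * 1 = 0 := by
        rw [hφconst y hy']; ring
      rw [hz] at H
      exact H.hasDerivWithinAt
    intro x hx
    have := constant_of_has_deriv_right_zero hcontg hg x hx
    simp only [hbc0, hbc1, mul_zero, add_zero, sub_zero, zero_add, zero_sub] at this
    linarith [this]
  -- positivity facts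
  have hγpos : 0 < γ := by rw [hγ]; exact Real.sqrt_pos.mpr (by positivity)
  have hγsq : γ ^ 2 = (α + β) / D := by
    rw [hγ]; exact Real.sq_sqrt (by positivity)
  -- u = α v₁ - β v₀ and its first integral
  have hu' : ∀ x ∈ Set.Icc (0:ℝ) L,
      HasDerivAt (fun y => α * deriv v₁ y - β * deriv v₀ y)
        (γ ^ 2 * (α * v₁ x - β * v₀ x)) x := by
    intro x hx
    have H := ((hda1' x hx).const_mul α).sub ((hda0' x hx).const_mul β)
    have hz : α * deriv (deriv v₁) x - β * deriv (deriv v₀) x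
        = γ ^ 2 * (α * v₁ x - β * v₀ x) := by
      rw [hγsq, div_mul_eq_mul_div, eq_div_iff hD.ne']
      linear_combination α * hode1 x hx - β * hode0 x hx
    rwa [hz] at H
  have hu : ∀ x ∈ Set.Icc (0:ℝ) L,
      HasDerivAt (fun y => α * v₁ y - β * v₀ y)
        (α * deriv v₁ x - β * deriv v₀ x) x := fun x hx =>
    ((hda1 x hx).const_mul α).sub ((hda0 x hx).const_mul β)
  set F := fun y => (α * deriv v₁ y - β * deriv v₀ y) * Real.sinh (γ * y)
      - γ * (α * v₁ y - β * v₀ y) * Real.cosh (γ * y) with hF_def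
  have hFd : ∀ x ∈ Set.Icc (0:ℝ) L, HasDerivAt F 0 x := by
    intro x hx
    have hsinh : HasDerivAt (fun y => Real.sinh (γ * y)) (γ * Real.cosh (γ * x)) x := by
      have := (Real.hasDerivAt_sinh (γ * x)).comp x ((hasDerivAt_id x).const_mul γ)
      simpa [mul_comm, Function.comp_def] using this
    have hcosh : HasDerivAt (fun y => Real.cosh (γ * y)) (γ * Real.sinh (γ * x)) x := by
      have := (Real.hasDerivAt_cosh (γ * x)).comp x ((hasDerivAt_id x).const_mul γ)
      simpa [mul_comm, Function.comp_def] using this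
    have H := ((hu' x hx).mul hsinh).sub ((((hu x hx)).const_mul γ).mul hcosh)
    exact H.congr_deriv (by ring)
  have hcontF : ContinuousOn F (Set.Icc (0:ℝ) L) := by
    apply ContinuousOn.sub
    · exact ((continuousOn_const.mul (d1'.continuousOn.mono hsub)).sub
        (continuousOn_const.mul (d0'.continuousOn.mono hsub))).mul
        ((Real.continuous_sinh.comp (continuous_const.mul continuous_id)).continuousOn)
    · exact (continuousOn_const.mul ((continuousOn_const.mul (d1.continuousOn.mono hsub)).sub
        (continuousOn_const.mul (d0.continuousOn.mono hsub)))).mul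
        ((Real.continuous_cosh.comp (continuous_const.mul continuous_id)).continuousOn)
  have hFL : F L = F 0 :=
    constant_of_has_deriv_right_zero hcontF
      (fun y hy => (hFd y (Set.Ico_subset_Icc_self hy)).hasDerivWithinAt) L
      ⟨hL.le, le_rfl⟩
  have hF0 : F 0 = 0 := by
    simp [hF_def, hbc0, hbc1]
  -- extract endpoint relation
  have hLmem : L ∈ Set.Icc (0:ℝ) L := ⟨hL.le, le_rfl⟩
  have hd0L : deriv v₀ L = k := by
    have := hφconst L hLmem; rw [hbc2] at this; linarith
  have hv1L : v₁ L = k * L - c * α / (α + β) := by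
    have := hsum L hLmem; rw [hbc3] at this; linarith
  have hE : (α * 0 - β * k) * Real.sinh (γ * L)
      - γ * (α * (k * L - c * α / (α + β)) - β * (c * α / (α + β))) * Real.cosh (γ * L) = 0 := by
    have := hFL
    rw [hF0, hF_def] at this
    simp only [hbc2, hd0L, hv1L, hbc3] at this
    linarith [this]
  -- turn into polynomial identity with tanh
  have hαβ : (0:ℝ) < α + β := by positivity
  have hC : (0:ℝ) < Real.cosh (γ * L) := Real.cosh_pos _
  have hS : (0:ℝ) < Real.sinh (γ * L) := Real.sinh_pos_iff.mpr (by positivity)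
  set T := Real.tanh (γ * L) with hT_def
  have hTC : Real.sinh (γ * L) = T * Real.cosh (γ * L) := by
    rw [hT_def, Real.tanh_eq_sinh_div_cosh, div_mul_cancel₀ _ hC.ne']
  have hTpos : 0 < T := by
    rw [hT_def, Real.tanh_eq_sinh_div_cosh]; exact div_pos hS hC
  have hE2 : β * k * T + γ * (α * k * L - c * α) = 0 := by
    have h3 : (β * k * T + γ * (α * k * L - c * α)) * Real.cosh (γ * L) = 0 := by
      rw [hTC] at hE
      have hcα : α * (c * α / (α + β)) + β * (c * α / (α + β)) = c * α := by
        field_simp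
      linear_combination -hE + γ * Real.cosh (γ * L) * hcα
    exact (mul_eq_zero.mp h3).resolve_right hC.ne'
  -- solve for k
  have hden : 0 < ρ * L + (1 - ρ) * T / γ := by
    rw [hρ]
    have h1 : 0 < α / (α + β) * L := by positivity
    have h2 : (0:ℝ) < (1 - α / (α + β)) * T / γ := by
      have : 1 - α / (α + β) = β / (α + β) := by field_simp; ring
      rw [this]; positivity
    linarith
  have hkm : k = m := by
    rw [hρ] at hden
    rw [hm, hρ, eq_comm, div_eq_iff hden.ne', eq_comm]
    have hαβ' : α + β ≠ 0 := hαβ.ne'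
    rw [hk_def] at hE2
    field_simp
    linear_combination hE2
  refine ⟨fun x hx => by rw [hsum x hx, hkm], by rw [hkm]⟩
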